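/- If B is a 1-DeepLLL reduced basis (size-reduced and ‖π_k(b_k)‖² ≤ ‖π_k(b_ℓ)‖² for all k < ℓ), then B is 1-PotLLL reduced, i.e., Pot(B) ≤ Pot(σ_{k,ℓ} B) for all 1 ≤ k < ℓ ≤ n. -/

import Mathlib

open Finset

/-- π_j : orthogonal projection onto the orthogonal complement of span{b_0,…,b_{j-1}}. -/
noncomputable def projPerp {n m : ℕ} (b : Fin n → EuclideanSpace ℝ (Fin m)) (j : ℕ)
    (x : EuclideanSpace ℝ (Fin m)) : EuclideanSpace ℝ (Fin m) :=
  x - (Submodule.orthogonalProjectionOnto (Submodule.span ℝ (b '' {i | (i : ℕ) < j})) x : EuclideanSpace ℝ (Fin m))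

/-- The Gram–Schmidt vector b_i^* = π_i(b_i). -/
noncomputable def bstar {n m : ℕ} (b : Fin n → EuclideanSpace ℝ (Fin m)) (i : Fin n) :
    EuclideanSpace ℝ (Fin m) :=
  projPerp b i.val (b i)

/-- The potential Pot(B) = ∏ ‖b_i^*‖^{2(n-i+1)} (1-based), i.e. ∏ ‖b_i^*‖^{2(n-i)} (0-based). -/
noncomputable def Pot {n m : ℕ} (b : Fin n → EuclideanSpace ℝ (Fin m)) : ℝ :=
  ∏ i : Fin n, ‖bstar b i‖ ^ (2 * (n - i.val))

/-- Gram–Schmidt coefficient μ_{i,j} = ⟨b_i, b_j^*⟩ / ⟨b_j^*, b_j^*⟩. -/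
noncomputable def mu {n m : ℕ} (b : Fin n → EuclideanSpace ℝ (Fin m)) (i j : Fin n) : ℝ :=
  (inner ℝ (b i) (bstar b j) : ℝ) / (inner ℝ (bstar b j) (bstar b j) : ℝ)

/-- Size-reduced: |μ_{i,j}| ≤ 1/2 for all j < i. -/
def SizeReduced {n m : ℕ} (b : Fin n → EuclideanSpace ℝ (Fin m)) : Prop :=
  ∀ i j : Fin n, j < i → |mu b i j| ≤ 1/2

/-- The deep-insertion reordering σ_{k,ℓ}B = [b_1,…,b_{k-1}, b_ℓ, b_k,…,b_{ℓ-1}, b_{ℓ+1},…,b_n]. -/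
def insertFam {n : ℕ} {α : Type*} (b : Fin n → α) (k l : Fin n) : Fin n → α :=
  fun i => if i.val < k.val ∨ l.val < i.val then b i
    else if i = k then b l
    else b ⟨i.val - 1, lt_of_le_of_lt (Nat.sub_le _ _) i.isLt⟩


section Aux
variable {n m : ℕ} (b : Fin n → EuclideanSpace ℝ (Fin m))


lemma projPerp_unique (j : ℕ) (x y : EuclideanSpace ℝ (Fin m))
    (h1 : x - y ∈ Submodule.span ℝ (b '' {i | (i : ℕ) < j}))
    (h2 : y ∈ (Submodule.span ℝ (b '' {i | (i : ℕ) < j}))ᗮ) :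
    projPerp b j x = y := by
  unfold projPerp
  rw [← Submodule.starProjection_apply, Submodule.eq_starProjection_of_mem_orthogonal h1 (by simpa using h2)]
  abel

lemma projPerp_mem_orthogonal (j : ℕ) (x : EuclideanSpace ℝ (Fin m)) :
    projPerp b j x ∈ (Submodule.span ℝ (b '' {i | (i : ℕ) < j}))ᗮ :=
  Submodule.sub_starProjection_mem_orthogonal x

lemma sub_projPerp_mem (j : ℕ) (x : EuclideanSpace ℝ (Fin m)) :
    x - projPerp b j x ∈ Submodule.span ℝ (b '' {i | (i : ℕ) < j}) := by
  unfold projPerp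
  simpa using (Submodule.orthogonalProjectionOnto (Submodule.span ℝ (b '' {i | (i : ℕ) < j})) x).2


lemma proj_sup_mem (K : Submodule ℝ (EuclideanSpace ℝ (Fin m)))
    (w x u v : EuclideanSpace ℝ (Fin m))
    (hwu : w - u ∈ K) (hu : u ∈ Kᗮ) (hxv : x - v ∈ K) (hv : v ∈ Kᗮ) (hune : u ≠ 0) :
    x - (v - ((inner ℝ v u : ℝ)/‖u‖^2) • u) ∈ K ⊔ Submodule.span ℝ {w}
      ∧ v - ((inner ℝ v u : ℝ)/‖u‖^2) • u ∈ (K ⊔ Submodule.span ℝ {w})ᗮ := by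
  set c : ℝ := (inner ℝ v u : ℝ)/‖u‖^2 with hc
  have hunorm : ‖u‖^2 ≠ 0 := pow_ne_zero _ (norm_ne_zero_iff.mpr hune)
  have hKle : K ≤ K ⊔ Submodule.span ℝ {w} := le_sup_left
  have hwmem : w ∈ K ⊔ Submodule.span ℝ {w} :=
    Submodule.mem_sup_right (Submodule.mem_span_singleton_self w)
  have humem : u ∈ K ⊔ Submodule.span ℝ {w} := by
    have : u = w - (w - u) := by abel
    rw [this]; exact sub_mem hwmem (hKle hwu)
  have hmem : x - (v - c • u) ∈ K ⊔ Submodule.span ℝ {w} := by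
    have : x - (v - c • u) = (x - v) + c • u := by abel
    rw [this]; exact add_mem (hKle hxv) (Submodule.smul_mem _ _ humem)
  have horth : v - c • u ∈ (K ⊔ Submodule.span ℝ {w})ᗮ := by
    rw [← Submodule.inf_orthogonal]
    refine ⟨sub_mem hv (Submodule.smul_mem _ _ hu),
      Submodule.mem_orthogonal_singleton_iff_inner_left.mpr ?_⟩
    have hsplit : (inner ℝ (v - c • u) w : ℝ)
        = inner ℝ (v - c • u) u + (inner ℝ (v - c • u) (w - u) : ℝ) := by
      rw [← inner_add_right]; congr 1; abel
    rw [hsplit]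
    have h2 : (inner ℝ (v - c • u) (w - u) : ℝ) = 0 := by
      rw [real_inner_comm]
      exact Submodule.inner_right_of_mem_orthogonal hwu
        (sub_mem hv (Submodule.smul_mem _ c hu))
    rw [h2, add_zero, inner_sub_left, real_inner_smul_left,
      real_inner_self_eq_norm_sq, hc]
    field_simp
    simp
  exact ⟨hmem, horth⟩


variable {k l : Fin n}

lemma insertFam_img_lo (hj : ∀ i : Fin n, (i:ℕ) < j → (i:ℕ) < k.val) :
    insertFam b k l '' {i : Fin n | (i:ℕ) < j} = b '' {i : Fin n | (i:ℕ) < j} :=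
  Set.image_congr (fun i hi => by
    simp only [insertFam]
    rw [if_pos (Or.inl (hj i hi))])

lemma insertFam_img_mid (hkl : k < l) {j : ℕ} (hk : k.val < j) (hj : j ≤ l.val + 1) :
    insertFam b k l '' {i : Fin n | (i:ℕ) < j}
      = b '' {i : Fin n | (i:ℕ) < j - 1} ∪ {b l} := by
  have hkl' : k.val < l.val := hkl
  ext x
  simp only [Set.mem_image, Set.mem_union, Set.mem_setOf_eq, Set.mem_singleton_iff]
  constructor
  · rintro ⟨i, hi, rfl⟩
    by_cases h1 : i.val < k.val ∨ l.val < i.val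
    · have : i.val < k.val := by omega
      left
      exact ⟨i, by omega, by simp only [insertFam, if_pos h1]⟩
    · by_cases h2 : i = k
      · right; simp only [insertFam, if_neg h1, if_pos h2]
      · have hik : k.val < i.val := by
          rcases Nat.lt_or_ge k.val i.val with h | h
          · exact h
          · exfalso; exact h2 (Fin.ext (by omega))
        left
        refine ⟨⟨i.val - 1, lt_of_le_of_lt (Nat.sub_le _ _) i.isLt⟩, by simp; omega, ?_⟩
        simp only [insertFam, if_neg h1, if_neg h2]
  · rintro (⟨i, hi, rfl⟩ | rfl)
    · by_cases h1 : i.val < k.val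
      · exact ⟨i, by omega, by simp only [insertFam]; rw [if_pos (Or.inl h1)]⟩
      · have hin : i.val + 1 < n := by omega
        refine ⟨⟨i.val + 1, hin⟩, by simp; omega, ?_⟩
        have hc1 : ¬((⟨i.val + 1, hin⟩ : Fin n).val < k.val ∨ l.val < (⟨i.val + 1, hin⟩ : Fin n).val) := by
          simp; omega
        have hc2 : (⟨i.val + 1, hin⟩ : Fin n) ≠ k := by
          intro h; apply_fun Fin.val at h; simp at h; omega
        simp only [insertFam, if_neg hc1, if_neg hc2]
        congr 1
        all_goals exact Fin.ext (by simp)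
    · refine ⟨k, hk, ?_⟩
      have hc1 : ¬(k.val < k.val ∨ l.val < k.val) := by omega
      simp only [insertFam, if_neg hc1]
      simp

lemma insertFam_img_hi (hkl : k < l) {j : ℕ} (hj : l.val < j) :
    insertFam b k l '' {i : Fin n | (i:ℕ) < j} = b '' {i : Fin n | (i:ℕ) < j} := by
  have hkl' : k.val < l.val := hkl
  ext x
  simp only [Set.mem_image, Set.mem_setOf_eq]
  constructor
  · rintro ⟨i, hi, rfl⟩
    by_cases h1 : i.val < k.val ∨ l.val < i.val
    · exact ⟨i, hi, by simp only [insertFam, if_pos h1]⟩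
    · by_cases h2 : i = k
      · exact ⟨l, hj, by simp only [insertFam, if_neg h1, if_pos h2]⟩
      · have hik : k.val < i.val := by
          rcases Nat.lt_or_ge k.val i.val with h | h
          · exact h
          · exfalso; exact h2 (Fin.ext (by omega))
        refine ⟨⟨i.val - 1, lt_of_le_of_lt (Nat.sub_le _ _) i.isLt⟩, by simp; omega, ?_⟩
        simp only [insertFam, if_neg h1, if_neg h2]
  · rintro ⟨i, hi, rfl⟩
    by_cases h1 : i.val < k.val ∨ l.val < i.val
    · exact ⟨i, hi, by simp only [insertFam, if_pos h1]⟩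
    · by_cases h2 : i.val = l.val
      · refine ⟨k, by omega, ?_⟩
        have hc1 : ¬(k.val < k.val ∨ l.val < k.val) := by omega
        have hil : i = l := Fin.ext h2
        subst hil
        simp only [insertFam, if_neg hc1]
        simp
      · have hin : i.val + 1 < n := by omega
        refine ⟨⟨i.val + 1, hin⟩, by simp; omega, ?_⟩
        have hc1 : ¬((⟨i.val + 1, hin⟩ : Fin n).val < k.val ∨ l.val < (⟨i.val + 1, hin⟩ : Fin n).val) := by
          simp; omega
        have hc2 : (⟨i.val + 1, hin⟩ : Fin n) ≠ k := by
          intro h; apply_fun Fin.val at h; simp at h; omega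
        simp only [insertFam, if_neg hc1, if_neg hc2]
        congr 1
        all_goals exact Fin.ext (by simp)

lemma projPerp_ne_zero (hLI : LinearIndependent ℝ b) {j : ℕ} {t : Fin n} (hj : j ≤ t.val) :
    projPerp b j (b t) ≠ 0 := by
  intro h
  have hmem : b t ∈ Submodule.span ℝ (b '' {i : Fin n | (i:ℕ) < j}) := by
    have := sub_projPerp_mem b j (b t)
    rwa [h, sub_zero] at this
  exact hLI.notMem_span_image (by simp; omega) hmem

lemma bstar_ne_zero (hLI : LinearIndependent ℝ b) (i : Fin n) : bstar b i ≠ 0 :=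
  projPerp_ne_zero b hLI le_rfl

lemma norm_sq_identity (u v : EuclideanSpace ℝ (Fin m)) (hu : u ≠ 0) (hv : v ≠ 0) :
    ‖v‖^2 * ‖u - ((inner ℝ u v : ℝ)/‖v‖^2) • v‖^2
      = ‖u‖^2 * ‖v - ((inner ℝ v u : ℝ)/‖u‖^2) • u‖^2 := by
  have hun : ‖u‖^2 ≠ 0 := pow_ne_zero _ (norm_ne_zero_iff.mpr hu)
  have hvn : ‖v‖^2 ≠ 0 := pow_ne_zero _ (norm_ne_zero_iff.mpr hv)
  rw [norm_sub_sq_real, norm_sub_sq_real, real_inner_smul_right, real_inner_smul_right,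
    norm_smul, norm_smul, mul_pow, mul_pow, Real.norm_eq_abs, Real.norm_eq_abs,
    sq_abs, sq_abs, real_inner_comm v u]
  field_simp

lemma img_succ {j : ℕ} (hjn : j < n) :
    b '' {i : Fin n | (i:ℕ) < j+1} = b '' {i : Fin n | (i:ℕ) < j} ∪ {b ⟨j, hjn⟩} := by
  ext x
  simp only [Set.mem_image, Set.mem_union, Set.mem_setOf_eq, Set.mem_singleton_iff]
  constructor
  · rintro ⟨i, hi, rfl⟩
    rcases Nat.lt_or_ge i.val j with h | h
    · exact Or.inl ⟨i, h, rfl⟩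
    · have hij : i = ⟨j, hjn⟩ := Fin.ext (by simp; omega)
      right; rw [hij]
  · rintro (⟨i, hi, rfl⟩ | rfl)
    · exact ⟨i, by omega, rfl⟩
    · exact ⟨⟨j, hjn⟩, by simp, rfl⟩

lemma span_succ {j : ℕ} (hjn : j < n) :
    Submodule.span ℝ (b '' {i : Fin n | (i:ℕ) < j+1})
      = Submodule.span ℝ (b '' {i : Fin n | (i:ℕ) < j}) ⊔ Submodule.span ℝ {b ⟨j, hjn⟩} := by
  rw [img_succ b hjn, Submodule.span_union]

lemma projPerp_succ_bl (hLI : LinearIndependent ℝ b) {j : ℕ} (hjn : j < n) (hjl : j < l.val) :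
    projPerp b (j+1) (b l)
      = projPerp b j (b l)
        - ((inner ℝ (projPerp b j (b l)) (bstar b ⟨j, hjn⟩) : ℝ)/‖bstar b ⟨j, hjn⟩‖^2)
            • bstar b ⟨j, hjn⟩ := by
  have hspan := span_succ b hjn
  obtain ⟨h1, h2⟩ := proj_sup_mem _ _ (b l) _ _
    (sub_projPerp_mem b j (b ⟨j, hjn⟩))
    (projPerp_mem_orthogonal b j (b ⟨j, hjn⟩))
    (sub_projPerp_mem b j (b l))
    (projPerp_mem_orthogonal b j (b l))
    (bstar_ne_zero b hLI ⟨j, hjn⟩)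
  exact projPerp_unique b _ _ _ (by rw [hspan]; exact h1) (by rw [hspan]; exact h2)

lemma bstar_insert_mid (hLI : LinearIndependent ℝ b) (hkl : k < l) {j : ℕ}
    (hkj : k.val ≤ j) (hjl : j < l.val) (hjn : j + 1 < n) :
    bstar (insertFam b k l) ⟨j+1, hjn⟩
      = bstar b ⟨j, by omega⟩
        - ((inner ℝ (bstar b ⟨j, by omega⟩) (projPerp b j (b l)) : ℝ)/‖projPerp b j (b l)‖^2)
            • projPerp b j (b l) := by
  have hc : insertFam b k l ⟨j+1, hjn⟩ = b ⟨j, by omega⟩ := by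
    have h1 : ¬((⟨j+1, hjn⟩ : Fin n).val < k.val ∨ l.val < (⟨j+1, hjn⟩ : Fin n).val) := by
      simp; omega
    have h2 : (⟨j+1, hjn⟩ : Fin n) ≠ k := by
      intro h; apply_fun Fin.val at h; simp at h; omega
    simp only [insertFam, if_neg h1, if_neg h2]
    congr 1
  have hspan : Submodule.span ℝ (insertFam b k l '' {i : Fin n | (i:ℕ) < j+1})
      = Submodule.span ℝ (b '' {i : Fin n | (i:ℕ) < j}) ⊔ Submodule.span ℝ {b l} := by
    rw [insertFam_img_mid b hkl (by omega) (by omega), Submodule.span_union]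
    congr 2
  obtain ⟨h1, h2⟩ := proj_sup_mem _ _ (b ⟨j, by omega⟩) _ _
    (sub_projPerp_mem b j (b l))
    (projPerp_mem_orthogonal b j (b l))
    (sub_projPerp_mem b j (b ⟨j, by omega⟩))
    (projPerp_mem_orthogonal b j (b ⟨j, by omega⟩))
    (projPerp_ne_zero b hLI (by omega))
  exact projPerp_unique _ _ _ _ (by rw [hspan, hc]; exact h1) (by rw [hspan]; exact h2)

lemma bstar_insert_lo (hkl : k < l) {i : Fin n} (hi : i.val < k.val) :
    bstar (insertFam b k l) i = bstar b i := by
  have hspan : Submodule.span ℝ (insertFam b k l '' {t : Fin n | (t:ℕ) < i.val})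
      = Submodule.span ℝ (b '' {t : Fin n | (t:ℕ) < i.val}) := by
    rw [insertFam_img_lo b (fun t ht => by omega)]
  have hc : insertFam b k l i = b i := by
    simp only [insertFam]; rw [if_pos (Or.inl hi)]
  exact projPerp_unique _ _ _ _
    (by rw [hspan, hc]; exact sub_projPerp_mem b i.val (b i))
    (by rw [hspan]; exact projPerp_mem_orthogonal b i.val (b i))

lemma bstar_insert_hi (hkl : k < l) {i : Fin n} (hi : l.val < i.val) :
    bstar (insertFam b k l) i = bstar b i := by
  have hspan : Submodule.span ℝ (insertFam b k l '' {t : Fin n | (t:ℕ) < i.val})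
      = Submodule.span ℝ (b '' {t : Fin n | (t:ℕ) < i.val}) := by
    rw [insertFam_img_hi b hkl hi]
  have hc : insertFam b k l i = b i := by
    simp only [insertFam]; rw [if_pos (Or.inr hi)]
  exact projPerp_unique _ _ _ _
    (by rw [hspan, hc]; exact sub_projPerp_mem b i.val (b i))
    (by rw [hspan]; exact projPerp_mem_orthogonal b i.val (b i))

lemma bstar_insert_k (hkl : k < l) :
    bstar (insertFam b k l) k = projPerp b k.val (b l) := by
  have hspan : Submodule.span ℝ (insertFam b k l '' {t : Fin n | (t:ℕ) < k.val})
      = Submodule.span ℝ (b '' {t : Fin n | (t:ℕ) < k.val}) := by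
    rw [insertFam_img_lo b (fun t ht => ht)]
  have hc : insertFam b k l k = b l := by
    have h1 : ¬(k.val < k.val ∨ l.val < k.val) := by
      have : k.val < l.val := hkl
      omega
    simp only [insertFam, if_neg h1]; simp
  exact projPerp_unique _ _ _ _
    (by rw [hspan, hc]; exact sub_projPerp_mem b k.val (b l))
    (by rw [hspan]; exact projPerp_mem_orthogonal b k.val (b l))

lemma star_rec (hLI : LinearIndependent ℝ b) (hkl : k < l) {j : ℕ}
    (hkj : k.val ≤ j) (hjl : j < l.val) (hjn : j + 1 < n) :
    ‖projPerp b j (b l)‖^2 * ‖bstar (insertFam b k l) ⟨j+1, hjn⟩‖^2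
      = ‖bstar b ⟨j, by omega⟩‖^2 * ‖projPerp b (j+1) (b l)‖^2 := by
  rw [bstar_insert_mid b hLI hkl hkj hjl hjn, projPerp_succ_bl b hLI (by omega) hjl]
  exact norm_sq_identity _ _ (bstar_ne_zero b hLI _) (projPerp_ne_zero b hLI (by omega))

lemma claimC (hLI : LinearIndependent ℝ b) (hkl : k < l) :
    ∀ j : ℕ, k.val ≤ j → j ≤ l.val →
    ∏ t ∈ Finset.Ico k.val (j+1),
        (if h : t < n then ‖bstar (insertFam b k l) ⟨t, h⟩‖^2 else 1) ^ (n - t)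
      = (‖projPerp b j (b l)‖^2) ^ (n - j)
        * ∏ t ∈ Finset.Ico k.val j,
            (‖projPerp b t (b l)‖^2
              * (if h : t < n then ‖bstar b ⟨t, h⟩‖^2 else 1) ^ (n - t - 1)) := by
  intro j hkj
  induction j, hkj using Nat.le_induction with
  | base =>
    intro _
    rw [Finset.prod_Ico_succ_top le_rfl, Finset.Ico_self, Finset.prod_empty,
      one_mul, Finset.prod_empty, mul_one, dif_pos k.isLt]
    simp only [Fin.eta]
    rw [bstar_insert_k b hkl]
  | succ j hkj ih =>
    intro hjl
    have hjl' : j < l.val := by omega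
    have hjn : j + 1 < n := by omega
    have ihv := ih (by omega)
    rw [Finset.prod_Ico_succ_top (show k.val ≤ j + 1 by omega), ihv,
      Finset.prod_Ico_succ_top (show k.val ≤ j from hkj), dif_pos hjn]
    have hrec := star_rec b hLI hkl hkj hjl' hjn
    have e1 : n - j = (n - (j+1)) + 1 := by omega
    have e2 : n - j - 1 = n - (j+1) := by omega
    set P := ∏ t ∈ Finset.Ico k.val j,
        (‖projPerp b t (b l)‖^2
          * (if h : t < n then ‖bstar b ⟨t, h⟩‖^2 else 1) ^ (n - t - 1))
    set Dj := ‖projPerp b j (b l)‖^2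
    set Dj1 := ‖projPerp b (j+1) (b l)‖^2
    set Sj1 := ‖bstar (insertFam b k l) ⟨j+1, hjn⟩‖^2
    set Aj := ‖bstar b ⟨j, by omega⟩‖^2 with hAj
    have hdif : (if h : j < n then ‖bstar b ⟨j, h⟩‖^2 else 1) = Aj := by
      rw [dif_pos (by omega : j < n)]
    rw [hdif, e2, e1, pow_succ]
    calc Dj ^ (n - (j+1)) * Dj * P * Sj1 ^ (n - (j + 1))
        = (Dj * Sj1) ^ (n - (j+1)) * Dj * P := by rw [mul_pow]; ring
      _ = (Aj * Dj1) ^ (n - (j+1)) * Dj * P := by rw [hrec]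
      _ = Dj1 ^ (n - (j + 1)) * (P * (Dj * Aj ^ (n - (j+1)))) := by
          rw [mul_pow]; ring

theorem main_thm {n m : ℕ} (b : Fin n → EuclideanSpace ℝ (Fin m))
    (hLI : LinearIndependent ℝ b)
    (hdeep : ∀ k l : Fin n, k < l →
      ‖projPerp b k.val (b k)‖ ^ 2 ≤ ‖projPerp b k.val (b l)‖ ^ 2) :
    ∀ k l : Fin n, k < l → Pot b ≤ Pot (insertFam b k l) := by
  intro k l hkl
  have hkl' : k.val < l.val := hkl
  have hln : l.val < n := l.isLt
  set c := insertFam b k l with hc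
  set Af : ℕ → ℝ := fun t => if h : t < n then ‖bstar b ⟨t, h⟩‖^2 else 1 with hAf
  set Sf : ℕ → ℝ := fun t => if h : t < n then ‖bstar c ⟨t, h⟩‖^2 else 1 with hSf
  set Df : ℕ → ℝ := fun t => ‖projPerp b t (b l)‖^2 with hDf
  have hAnn : ∀ t, 0 ≤ Af t := fun t => by rw [hAf]; dsimp only; split <;> positivity
  have hSnn : ∀ t, 0 ≤ Sf t := fun t => by rw [hSf]; dsimp only; split <;> positivity
  have hDnn : ∀ t, 0 ≤ Df t := fun t => by rw [hDf]; positivity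
  have hPotb : Pot b = ∏ t ∈ Finset.range n, Af t ^ (n - t) := by
    unfold Pot
    rw [← Fin.prod_univ_eq_prod_range]
    exact Finset.prod_congr rfl fun i _ => by
      rw [hAf]; dsimp only; rw [dif_pos i.isLt, Fin.eta, pow_mul]
  have hPotc : Pot c = ∏ t ∈ Finset.range n, Sf t ^ (n - t) := by
    unfold Pot
    rw [← Fin.prod_univ_eq_prod_range]
    exact Finset.prod_congr rfl fun i _ => by
      rw [hSf]; dsimp only; rw [dif_pos i.isLt, Fin.eta, pow_mul]
  have split : ∀ f : ℕ → ℝ, ∏ t ∈ Finset.range n, f t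
      = (∏ t ∈ Finset.Ico 0 k.val, f t) * (∏ t ∈ Finset.Ico k.val (l.val+1), f t)
        * (∏ t ∈ Finset.Ico (l.val+1) n, f t) := by
    intro f
    rw [Finset.range_eq_Ico,
      ← Finset.prod_Ico_consecutive f (show (0:ℕ) ≤ l.val+1 by omega)
        (show l.val+1 ≤ n by omega),
      ← Finset.prod_Ico_consecutive f (show (0:ℕ) ≤ k.val by omega)
        (show k.val ≤ l.val+1 by omega)]
  -- X and Y factors agree
  have hX : ∀ t ∈ Finset.Ico 0 k.val, Sf t ^ (n - t) = Af t ^ (n - t) := by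
    intro t ht
    simp only [Finset.mem_Ico] at ht
    have htn : t < n := by omega
    rw [hSf, hAf]; dsimp only
    rw [dif_pos htn, dif_pos htn, bstar_insert_lo b hkl (by simpa using ht.2)]
  have hY : ∀ t ∈ Finset.Ico (l.val+1) n, Sf t ^ (n - t) = Af t ^ (n - t) := by
    intro t ht
    simp only [Finset.mem_Ico] at ht
    rw [hSf, hAf]; dsimp only
    rw [dif_pos ht.2, dif_pos ht.2, bstar_insert_hi b hkl (by simp; omega)]
  -- middle inequality
  have hAl : Df l.val = Af l.val := by
    rw [hDf, hAf]; dsimp only; rw [dif_pos hln]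
    congr 1
  have hmid : ∏ t ∈ Finset.Ico k.val (l.val+1), Af t ^ (n - t)
      ≤ ∏ t ∈ Finset.Ico k.val (l.val+1), Sf t ^ (n - t) := by
    have hC := claimC b hLI hkl l.val hkl'.le le_rfl
    have hRHS : ∏ t ∈ Finset.Ico k.val (l.val+1), Sf t ^ (n - t)
        = (Df l.val) ^ (n - l.val)
          * ∏ t ∈ Finset.Ico k.val l.val, (Df t * Af t ^ (n - t - 1)) := hC
    rw [hRHS, Finset.prod_Ico_succ_top hkl'.le, hAl]
    have hQ : ∏ t ∈ Finset.Ico k.val l.val, Af t ^ (n - t)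
        ≤ ∏ t ∈ Finset.Ico k.val l.val, (Df t * Af t ^ (n - t - 1)) := by
      apply Finset.prod_le_prod
      · intro t _; exact pow_nonneg (hAnn t) _
      · intro t ht
        simp only [Finset.mem_Ico] at ht
        have htn : t < n := by omega
        have hAD : Af t ≤ Df t := by
          rw [hAf, hDf]; dsimp only; rw [dif_pos htn]
          exact hdeep ⟨t, htn⟩ l (by rw [Fin.lt_def]; exact ht.2)
        have : Af t ^ (n - t) = Af t * Af t ^ (n - t - 1) := by
          rw [← pow_succ']
          congr 1
          omega
        rw [this]
        exact mul_le_mul_of_nonneg_right hAD (pow_nonneg (hAnn t) _)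
    calc (∏ t ∈ Finset.Ico k.val l.val, Af t ^ (n - t)) * Af l.val ^ (n - l.val)
        ≤ (∏ t ∈ Finset.Ico k.val l.val, (Df t * Af t ^ (n - t - 1)))
            * Af l.val ^ (n - l.val) :=
          mul_le_mul_of_nonneg_right hQ (pow_nonneg (hAnn _) _)
      _ = Af l.val ^ (n - l.val)
            * ∏ t ∈ Finset.Ico k.val l.val, (Df t * Af t ^ (n - t - 1)) := mul_comm _ _
  rw [hPotb, hPotc, split, split]
  rw [Finset.prod_congr rfl hX, Finset.prod_congr rfl hY]
  have h1 : (0:ℝ) ≤ ∏ t ∈ Finset.Ico 0 k.val, Af t ^ (n - t) :=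
    Finset.prod_nonneg fun t _ => pow_nonneg (hAnn t) _
  have h2 : (0:ℝ) ≤ ∏ t ∈ Finset.Ico (l.val+1) n, Af t ^ (n - t) :=
    Finset.prod_nonneg fun t _ => pow_nonneg (hAnn t) _
  exact mul_le_mul_of_nonneg_right (mul_le_mul_of_nonneg_left hmid h1) h2

end Aux


/-- a 1-DeepLLL reduced basis is 1-PotLLL reduced. -/
theorem deepLLL_one_is_potLLL_one {n m : ℕ} (b : Fin n → EuclideanSpace ℝ (Fin m))
    (hLI : LinearIndependent ℝ b)
    (hsize : SizeReduced b)
    (hdeep : ∀ k l : Fin n, k < l →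
      ‖projPerp b k.val (b k)‖ ^ 2 ≤ ‖projPerp b k.val (b l)‖ ^ 2) :
    ∀ k l : Fin n, k < l → Pot b ≤ Pot (insertFam b k l) := main_thm b hLI hdeep
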